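/- For integers m1 ≥ m2 ≥ b+r ≥ b ≥ a ≥ 0, the coefficient of z^{m1-a} y^{m2-b} in P(zy)^r / (1-y-z) equals C(m1+m2-a-b-r, m1-a), where P(q) = (1-√(1-4q))/2 is the shifted Catalan generating function. -/

import Mathlib

/-- The shifted Catalan generating function
`P(q) = Σ_{n≥1} (1/n) C(2n-2, n-1) q^n`. -/
noncomputable def catalanShifted : PowerSeries ℚ :=
  PowerSeries.mk fun n => if n = 0 then 0 else (Nat.choose (2 * n - 2) (n - 1) : ℚ) / n

/-- The bivariate power series `P(z·y)`, with variable `0` for `z` and `1` for `y`. -/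
noncomputable def Pzy : MvPowerSeries (Fin 2) ℚ :=
  fun d => if d 0 = d 1 then PowerSeries.coeff (d 0) catalanShifted else 0

/-- The bivariate power series `1/(1-y-z) = Σ_{i,j≥0} C(i+j,i) z^i y^j`. -/
noncomputable def invOneSubYZ : MvPowerSeries (Fin 2) ℚ :=
  fun d => (Nat.choose (d 0 + d 1) (d 0) : ℚ)

noncomputable def D (i j : ℕ) : Fin 2 →₀ ℕ := Finsupp.single 0 i + Finsupp.single 1 j
@[simp] lemma D_apply0 (i j : ℕ) : D i j 0 = i := by simp [D, Finsupp.single_apply]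
@[simp] lemma D_apply1 (i j : ℕ) : D i j 1 = j := by simp [D, Finsupp.single_apply]

lemma cs_coeff (n : ℕ) : PowerSeries.coeff n catalanShifted =
    if n = 0 then 0 else (catalan (n-1) : ℚ) := by
  rw [catalanShifted, PowerSeries.coeff_mk]
  rcases Nat.eq_zero_or_pos n with h | h
  · simp [h]
  · have hn : n ≠ 0 := h.ne'
    simp only [hn, if_false]
    have key : ((n - 1) + 1) * catalan (n-1) = Nat.centralBinom (n-1) :=
      succ_mul_catalan_eq_centralBinom (n-1)
    have h1 : (n - 1) + 1 = n := by omega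
    rw [h1] at key
    have h2 : Nat.centralBinom (n-1) = Nat.choose (2*n-2) (n-1) := by
      rw [Nat.centralBinom]; congr 1; omega
    rw [← h2, ← key]
    push_cast
    have : (n:ℚ) ≠ 0 := Nat.cast_ne_zero.mpr hn
    field_simp

@[simp] lemma coeff_Pzy (i j : ℕ) : MvPowerSeries.coeff (D i j) Pzy =
    if i = j then PowerSeries.coeff i catalanShifted else 0 := by
  show Pzy (D i j) = _
  rw [Pzy]; simp

@[simp] lemma coeff_invS (i j : ℕ) : MvPowerSeries.coeff (D i j) invOneSubYZ =
    (Nat.choose (i + j) i : ℚ) := by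
  show invOneSubYZ (D i j) = _
  rw [invOneSubYZ]; simp

lemma coeff_X0 (i j : ℕ) : MvPowerSeries.coeff (D i j) (MvPowerSeries.X 0 : MvPowerSeries (Fin 2) ℚ) =
    if i = 1 ∧ j = 0 then 1 else 0 := by
  rw [MvPowerSeries.coeff_X]
  by_cases h : D i j = Finsupp.single 0 1
  · have h0 := congrArg (fun f => f (0:Fin 2)) h
    have h1 := congrArg (fun f => f (1:Fin 2)) h
    simp [Finsupp.single_apply] at h0 h1
    subst h0; subst h1
    rw [if_pos h, if_pos ⟨rfl, rfl⟩]
  · rw [if_neg h, eq_comm]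
    rw [if_neg]
    rintro ⟨rfl, rfl⟩
    apply h
    ext x; fin_cases x <;> simp [Finsupp.single_apply]

lemma coeff_X1 (i j : ℕ) : MvPowerSeries.coeff (D i j) (MvPowerSeries.X 1 : MvPowerSeries (Fin 2) ℚ) =
    if i = 0 ∧ j = 1 then 1 else 0 := by
  rw [MvPowerSeries.coeff_X]
  by_cases h : D i j = Finsupp.single 1 1
  · have h0 := congrArg (fun f => f (0:Fin 2)) h
    have h1 := congrArg (fun f => f (1:Fin 2)) h
    simp [Finsupp.single_apply] at h0 h1
    subst h0; subst h1
    rw [if_pos h, if_pos ⟨rfl, rfl⟩]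
  · rw [if_neg h, eq_comm]
    rw [if_neg]
    rintro ⟨rfl, rfl⟩
    apply h
    ext x; fin_cases x <;> simp [Finsupp.single_apply]

lemma coeff_one (i j : ℕ) : MvPowerSeries.coeff (D i j) (1 : MvPowerSeries (Fin 2) ℚ) =
    if i = 0 ∧ j = 0 then 1 else 0 := by
  rw [MvPowerSeries.coeff_one]
  by_cases h : D i j = 0
  · have h0 := congrArg (fun f => f (0:Fin 2)) h
    have h1 := congrArg (fun f => f (1:Fin 2)) h
    simp at h0 h1
    subst h0; subst h1
    rw [if_pos h, if_pos ⟨rfl, rfl⟩]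
  · rw [if_neg h, eq_comm, if_neg]
    rintro ⟨rfl, rfl⟩
    apply h
    ext x; fin_cases x <;> simp

lemma eq_D (d : Fin 2 →₀ ℕ) : d = D (d 0) (d 1) := by
  ext x
  fin_cases x <;> simp

lemma D_add (i j k l : ℕ) : D i j + D k l = D (i+k) (j+l) := by
  ext x; fin_cases x <;> simp

lemma D_inj {i j k l : ℕ} (h : D i j = D k l) : i = k ∧ j = l := by
  constructor
  · have := congrArg (fun f => f 0) h; simpa using this
  · have := congrArg (fun f => f 1) h; simpa using this

lemma coeff_mul_D (φ ψ : MvPowerSeries (Fin 2) ℚ) (i j : ℕ) :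
    MvPowerSeries.coeff (D i j) (φ * ψ) =
      ∑ k ∈ Finset.range (i+1), ∑ l ∈ Finset.range (j+1),
        MvPowerSeries.coeff (D k l) φ * MvPowerSeries.coeff (D (i-k) (j-l)) ψ := by
  rw [MvPowerSeries.coeff_mul]
  rw [← Finset.sum_product']
  apply Finset.sum_nbij' (i := fun p => (p.1 0, p.1 1)) (j := fun q => (D q.1 q.2, D (i-q.1) (j-q.2)))
  · intro p hp
    rw [Finset.HasAntidiagonal.mem_antidiagonal] at hp
    have h0 : p.1 0 + p.2 0 = i := by
      have := congrArg (fun f => f 0) hp; simpa using this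
    have h1 : p.1 1 + p.2 1 = j := by
      have := congrArg (fun f => f 1) hp; simpa using this
    simp only [Finset.mem_product, Finset.mem_range]
    omega
  · intro q hq
    simp only [Finset.mem_product, Finset.mem_range] at hq
    rw [Finset.HasAntidiagonal.mem_antidiagonal, D_add]
    congr 1 <;> omega
  · intro p hp
    rw [Finset.HasAntidiagonal.mem_antidiagonal] at hp
    have h0 : p.1 0 + p.2 0 = i := by
      have := congrArg (fun f => f 0) hp; simpa using this
    have h1 : p.1 1 + p.2 1 = j := by
      have := congrArg (fun f => f 1) hp; simpa using this
    have e1 : p.1 = D (p.1 0) (p.1 1) := eq_D _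
    have e2 : p.2 = D (i - p.1 0) (j - p.1 1) := by
      rw [eq_D p.2]; congr 1 <;> omega
    exact Prod.ext e1.symm e2.symm
  · intro q hq
    simp only [Finset.mem_product, Finset.mem_range] at hq
    simp
  · intro p hp
    rw [Finset.HasAntidiagonal.mem_antidiagonal] at hp
    have h0 : p.1 0 + p.2 0 = i := by
      have := congrArg (fun f => f 0) hp; simpa using this
    have h1 : p.1 1 + p.2 1 = j := by
      have := congrArg (fun f => f 1) hp; simpa using this
    have e1 : p.1 = D (p.1 0) (p.1 1) := eq_D _
    have e2 : p.2 = D (i - p.1 0) (j - p.1 1) := by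
      rw [eq_D p.2]; congr 1 <;> omega
    rw [← e1, ← e2]

noncomputable def diag (S : PowerSeries ℚ) : MvPowerSeries (Fin 2) ℚ :=
  fun d => if d 0 = d 1 then PowerSeries.coeff (d 0) S else 0

@[simp] lemma coeff_diag (S : PowerSeries ℚ) (i j : ℕ) :
    MvPowerSeries.coeff (D i j) (diag S) =
      if i = j then PowerSeries.coeff i S else 0 := by
  show diag S (D i j) = _
  rw [diag]; simp

lemma Pzy_eq_diag : Pzy = diag catalanShifted := rfl

lemma diag_mul (S T : PowerSeries ℚ) : diag S * diag T = diag (S * T) := by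
  have key : ∀ i j : ℕ, MvPowerSeries.coeff (D i j) (diag S * diag T)
      = MvPowerSeries.coeff (D i j) (diag (S * T)) := by
    intro i j
    rw [coeff_mul_D, coeff_diag]
    by_cases hij : i = j
    · subst hij
      rw [if_pos rfl, PowerSeries.coeff_mul,
        Finset.Nat.sum_antidiagonal_eq_sum_range_succ_mk]
      apply Finset.sum_congr rfl
      intro k hk
      rw [Finset.mem_range] at hk
      rw [Finset.sum_eq_single k]
      · rw [coeff_diag, coeff_diag, if_pos rfl, if_pos rfl]
      · intro l hl hlk
        rw [coeff_diag]
        rw [if_neg (by omega), zero_mul]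
      · intro h; exact absurd (Finset.mem_range.mpr hk) h
    · rw [if_neg hij]
      apply Finset.sum_eq_zero
      intro k hk
      apply Finset.sum_eq_zero
      intro l hl
      rw [Finset.mem_range] at hk hl
      rw [coeff_diag, coeff_diag]
      by_cases h1 : k = l
      · rw [if_neg (show ¬ (i-k = j-l) by omega), mul_zero]
      · rw [if_neg h1, zero_mul]
  apply MvPowerSeries.ext
  intro d
  rw [eq_D d]
  exact key _ _

lemma diag_pow (S : PowerSeries ℚ) (r : ℕ) :
    (diag S) ^ r = diag (S ^ r) := by
  induction r with
  | zero =>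
    simp only [pow_zero]
    apply MvPowerSeries.ext
    intro d
    rw [eq_D d, coeff_one, coeff_diag]
    by_cases h : d 0 = d 1
    · rw [if_pos h]
      by_cases h0 : d 0 = 0
      · rw [if_pos ⟨h0, h ▸ h0⟩, h0]
        simp
      · rw [if_neg (by tauto)]
        rw [PowerSeries.coeff_one, if_neg h0]
    · rw [if_neg h, if_neg (by omega)]
  | succ n ih =>
    rw [pow_succ, pow_succ, ih, diag_mul]
lemma P_eq : catalanShifted = PowerSeries.X + catalanShifted ^ 2 := by
  apply PowerSeries.ext
  intro n
  rw [map_add, PowerSeries.coeff_X, pow_two, PowerSeries.coeff_mul,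
    Finset.Nat.sum_antidiagonal_eq_sum_range_succ_mk, cs_coeff]
  rcases n with _ | _ | m
  · simp [cs_coeff]
  · simp [cs_coeff, Finset.sum_range_succ]
  · -- n = m + 2
    rw [if_neg (by omega), if_neg (by omega)]
    have hs : ∀ k ∈ Finset.range (m+3), (PowerSeries.coeff k catalanShifted) *
        (PowerSeries.coeff (m+2-k) catalanShifted) =
        if k = 0 ∨ k = m + 2 then 0 else (catalan (k-1) * catalan (m+1-k) : ℚ) := by
      intro k hk
      rw [Finset.mem_range] at hk
      rw [cs_coeff, cs_coeff]
      by_cases h0 : k = 0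
      · simp [h0]
      by_cases h1 : k = m + 2
      · rw [if_pos (Or.inr h1), if_neg h0, if_pos (by omega)]
        simp
      · rw [if_neg h0, if_neg (by omega), if_neg (by tauto),
          show m + 2 - k - 1 = m + 1 - k from by omega]
    rw [Finset.sum_congr rfl hs, Finset.sum_range_succ, if_pos (Or.inr rfl),
      add_zero, Finset.sum_range_succ', if_pos (Or.inl rfl), add_zero]
    have h2 : ∀ k ∈ Finset.range (m+1), (if k + 1 = 0 ∨ k + 1 = m + 2 then (0:ℚ)
        else (catalan (k+1-1) * catalan (m+1-(k+1)) : ℚ))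
        = (catalan k * catalan (m-k) : ℚ) := by
      intro k hk
      rw [Finset.mem_range] at hk
      rw [if_neg (by omega), Nat.add_sub_cancel,
          show m + 1 - (k+1) = m - k from by omega]
    rw [Finset.sum_congr rfl h2]
    have h3 := catalan_succ' m
    rw [Finset.Nat.sum_antidiagonal_eq_sum_range_succ_mk] at h3
    rw [show m + 1 + 1 - 1 = m + 1 from rfl, h3]
    rw [zero_add]
    push_cast
    rfl
lemma coeff_P_pow_eq_zero {r k : ℕ} (h : k < r) :
    PowerSeries.coeff k (catalanShifted ^ r) = 0 := by
  have hX : (PowerSeries.X : PowerSeries ℚ) ∣ catalanShifted := by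
    rw [PowerSeries.X_dvd_iff, ← PowerSeries.coeff_zero_eq_constantCoeff, cs_coeff]
    simp
  have : (PowerSeries.X : PowerSeries ℚ) ^ r ∣ catalanShifted ^ r :=
    pow_dvd_pow_of_dvd hX r
  rw [PowerSeries.X_pow_dvd_iff] at this
  exact this k h

lemma coeff_Ppow (i j r : ℕ) : MvPowerSeries.coeff (D i j) (Pzy ^ r) =
    if i = j then PowerSeries.coeff i (catalanShifted ^ r) else 0 := by
  rw [Pzy_eq_diag, diag_pow, coeff_diag]

lemma coeff_Ppow_eq_zero {i j r : ℕ} (h : min i j < r) :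
    MvPowerSeries.coeff (D i j) (Pzy ^ r) = 0 := by
  rw [coeff_Ppow]
  by_cases hij : i = j
  · rw [if_pos hij, coeff_P_pow_eq_zero (by omega)]
  · rw [if_neg hij]

noncomputable def f (i j r : ℕ) : ℚ :=
  MvPowerSeries.coeff (D i j) (Pzy ^ r * invOneSubYZ)

lemma f_zero {i j r : ℕ} (h : min i j < r) : f i j r = 0 := by
  rw [f, coeff_mul_D]
  apply Finset.sum_eq_zero
  intro k hk
  apply Finset.sum_eq_zero
  intro l hl
  rw [Finset.mem_range] at hk hl
  rw [coeff_Ppow_eq_zero (by omega), zero_mul]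

lemma coeff_X0_mul (ψ : MvPowerSeries (Fin 2) ℚ) (i j : ℕ) :
    MvPowerSeries.coeff (D i j) (MvPowerSeries.X 0 * ψ) =
      if i = 0 then 0 else MvPowerSeries.coeff (D (i-1) j) ψ := by
  rw [coeff_mul_D]
  rcases Nat.eq_zero_or_pos i with h | h
  · subst h
    rw [if_pos rfl]
    apply Finset.sum_eq_zero
    intro k hk
    apply Finset.sum_eq_zero
    intro l hl
    rw [Finset.mem_range] at hk hl
    rw [coeff_X0, if_neg (by omega), zero_mul]
  · rw [if_neg (by omega)]
    rw [Finset.sum_eq_single 1]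
    · rw [Finset.sum_eq_single 0]
      · rw [coeff_X0, if_pos ⟨rfl, rfl⟩, one_mul, Nat.sub_zero]
      · intro l hl hl0
        rw [coeff_X0, if_neg (by tauto), zero_mul]
      · intro hmem
        exact absurd (Finset.mem_range.mpr (by omega)) hmem
    · intro k hk hk1
      apply Finset.sum_eq_zero
      intro l hl
      rw [coeff_X0, if_neg (by tauto), zero_mul]
    · intro hmem
      exact absurd (Finset.mem_range.mpr (by omega)) hmem

lemma coeff_X1_mul (ψ : MvPowerSeries (Fin 2) ℚ) (i j : ℕ) :
    MvPowerSeries.coeff (D i j) (MvPowerSeries.X 1 * ψ) =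
      if j = 0 then 0 else MvPowerSeries.coeff (D i (j-1)) ψ := by
  rw [coeff_mul_D]
  rcases Nat.eq_zero_or_pos j with h | h
  · subst h
    rw [if_pos rfl]
    apply Finset.sum_eq_zero
    intro k hk
    apply Finset.sum_eq_zero
    intro l hl
    rw [Finset.mem_range] at hk hl
    rw [coeff_X1, if_neg (by omega), zero_mul]
  · rw [if_neg (by omega)]
    rw [Finset.sum_eq_single 0]
    · rw [Finset.sum_eq_single 1]
      · rw [coeff_X1, if_pos ⟨rfl, rfl⟩, one_mul, Nat.sub_zero]
      · intro l hl hl0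
        rw [coeff_X1, if_neg (by tauto), zero_mul]
      · intro hmem
        exact absurd (Finset.mem_range.mpr (by omega)) hmem
    · intro k hk hk1
      apply Finset.sum_eq_zero
      intro l hl
      rw [coeff_X1, if_neg (by tauto), zero_mul]
    · intro hmem
      exact absurd (Finset.mem_range.mpr (by omega)) hmem

lemma inv_rel : invOneSubYZ = 1 +
    (MvPowerSeries.X 0 + MvPowerSeries.X 1) * invOneSubYZ := by
  have key : ∀ i j : ℕ, MvPowerSeries.coeff (D i j) invOneSubYZ =
      MvPowerSeries.coeff (D i j)
        (1 + (MvPowerSeries.X 0 + MvPowerSeries.X 1) * invOneSubYZ) := by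
    intro i j
    rw [map_add, add_mul, map_add, coeff_X0_mul, coeff_X1_mul, coeff_one, coeff_invS]
    rcases Nat.eq_zero_or_pos i with hi | hi <;> rcases Nat.eq_zero_or_pos j with hj | hj
    · subst hi; subst hj; norm_num
    · subst hi
      rw [if_neg (by omega), if_pos rfl, if_neg (by omega), coeff_invS]
      rw [show 0 + j = 0 + (j-1) + 1 from by omega]
      simp [Nat.choose]
    · subst hj
      rw [if_neg (by omega), if_neg (by omega), if_pos rfl, coeff_invS]
      rw [show i + 0 = (i-1+0) + 1 from by omega, show i = (i-1) + 1 from by omega]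
      simp [Nat.choose_succ_succ]
    · rw [if_neg (by omega), if_neg (by omega), if_neg (by omega), coeff_invS, coeff_invS,
        zero_add]
      obtain ⟨i', rfl⟩ : ∃ i', i = i' + 1 := ⟨i-1, by omega⟩
      obtain ⟨j', rfl⟩ : ∃ j', j = j' + 1 := ⟨j-1, by omega⟩
      norm_cast
      rw [show i'+1+(j'+1) = (i'+j'+1)+1 from by ring, Nat.choose_succ_succ]
      congr 2 <;> omega
  apply MvPowerSeries.ext
  intro d
  rw [eq_D d]
  exact key _ _
lemma coeff_X0X1 (i j : ℕ) :
    MvPowerSeries.coeff (D i j)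
      (MvPowerSeries.X 0 * MvPowerSeries.X 1 : MvPowerSeries (Fin 2) ℚ) =
      if i = 1 ∧ j = 1 then 1 else 0 := by
  rw [coeff_X0_mul]
  by_cases h : i = 0
  · rw [if_pos h, if_neg (by omega)]
  · rw [if_neg h, coeff_X1]
    by_cases h2 : i = 1 ∧ j = 1
    · rw [if_pos ⟨by omega, h2.2⟩, if_pos h2]
    · rw [if_neg (by omega), if_neg h2]

lemma f_rec1 (i j r : ℕ) : f i j r = MvPowerSeries.coeff (D i j) (Pzy ^ r)
    + (if i = 0 then 0 else f (i-1) j r) + (if j = 0 then 0 else f i (j-1) r) := by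
  have hs : Pzy ^ r * invOneSubYZ = Pzy ^ r
      + MvPowerSeries.X 0 * (Pzy ^ r * invOneSubYZ)
      + MvPowerSeries.X 1 * (Pzy ^ r * invOneSubYZ) := by
    linear_combination (Pzy ^ r) * inv_rel
  rw [f, hs, map_add, map_add, coeff_X0_mul, coeff_X1_mul]
  rfl

lemma Pzy_rel : Pzy = MvPowerSeries.X 0 * MvPowerSeries.X 1 + Pzy ^ 2 := by
  have key : ∀ i j : ℕ, MvPowerSeries.coeff (D i j) Pzy =
      MvPowerSeries.coeff (D i j) (MvPowerSeries.X 0 * MvPowerSeries.X 1 + Pzy ^ 2) := by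
    intro i j
    rw [map_add, coeff_Pzy, coeff_X0X1, coeff_Ppow]
    have hP := congrArg (PowerSeries.coeff i) P_eq
    rw [map_add, PowerSeries.coeff_X] at hP
    by_cases hij : i = j
    · subst hij
      rw [if_pos rfl, if_pos rfl, hP]
      by_cases h1 : i = 1
      · rw [if_pos h1, if_pos ⟨h1, h1⟩]
      · rw [if_neg h1, if_neg (by tauto)]
    · rw [if_neg hij, if_neg hij, if_neg (by omega), add_zero]
  apply MvPowerSeries.ext
  intro d
  rw [eq_D d]
  exact key _ _

lemma f_rec2 (i j r : ℕ) : f i j (r+1) =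
    (if i = 0 ∨ j = 0 then 0 else f (i-1) (j-1) r) + f i j (r+2) := by
  have hs : Pzy ^ (r+1) * invOneSubYZ =
      MvPowerSeries.X 0 * (MvPowerSeries.X 1 * (Pzy ^ r * invOneSubYZ))
      + Pzy ^ (r+2) * invOneSubYZ := by
    linear_combination (Pzy ^ r * invOneSubYZ) * Pzy_rel
  rw [f, hs, map_add, coeff_X0_mul]
  rcases Nat.eq_zero_or_pos i with h | h
  · rw [if_pos h, if_pos (Or.inl h), zero_add, zero_add]; rfl
  · rw [if_neg (by omega), coeff_X1_mul]
    rcases Nat.eq_zero_or_pos j with h' | h'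
    · rw [if_pos h', if_pos (Or.inr h'), zero_add, zero_add]; rfl
    · rw [if_neg (by omega), if_neg (by push_neg; omega)]; rfl

lemma claimG : ∀ n i j r, 2*(i+j) + (min i j - r) ≤ n → r ≤ min i j →
    f i j r = ((i+j-r).choose (max i j) : ℚ) := by
  intro n
  induction n using Nat.strong_induction_on with
  | _ n IH =>
    intro i j r hn hr
    rcases Nat.lt_trichotomy i j with hij | hij | hij
    · -- i < j
      obtain ⟨j', rfl⟩ : ∃ j', j = j' + 1 := ⟨j-1, by omega⟩
      have h1 : (if j' + 1 = 0 then (0:ℚ) else f i (j'+1-1) r)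
          = ((i+j'-r).choose j' : ℚ) := by
        rw [if_neg (by omega), show j'+1-1 = j' from rfl,
          IH (2*(i+j') + (min i j' - r)) (by omega) i j' r (le_refl _) (by omega),
          show max i j' = j' from by omega]
      have h2 : (if i = 0 then (0:ℚ) else f (i-1) (j'+1) r)
          = ((i+j'-r).choose (j'+1) : ℚ) := by
        by_cases h : i = 0
        · rw [if_pos h]
          have : r = 0 := by omega
          subst this; subst h
          rw [Nat.choose_eq_zero_of_lt (by omega)]
          norm_num
        · obtain ⟨i', rfl⟩ : ∃ i', i = i' + 1 := ⟨i-1, by omega⟩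
          rw [if_neg (by omega), show i'+1-1 = i' from rfl]
          by_cases h' : r ≤ min i' (j'+1)
          · rw [IH (2*(i'+(j'+1)) + (min i' (j'+1) - r)) (by omega) i' (j'+1) r (le_refl _) h',
              show max i' (j'+1) = j'+1 from by omega,
              show i'+(j'+1)-r = (i'+1)+j'-r from by omega]
          · rw [f_zero (by omega), Nat.choose_eq_zero_of_lt (by omega), Nat.cast_zero]
      rw [f_rec1, coeff_Ppow, if_neg (by omega), h2, h1, zero_add,
        show max i (j'+1) = j'+1 from by omega,
        show i+(j'+1)-r = (i+j'-r)+1 from by omega]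
      rw [Nat.choose_succ_succ]
      push_cast
      ring
    · -- i = j
      subst hij
      rcases Nat.eq_zero_or_pos i with h0 | h0
      · subst h0
        have : r = 0 := by omega
        subst this
        rw [f_rec1, pow_zero]
        simp [_root_.coeff_one]
      · obtain ⟨i', rfl⟩ : ∃ i', i = i' + 1 := ⟨i-1, by omega⟩
        rcases Nat.eq_zero_or_pos r with hr0 | hr0
        · subst hr0
          have hsymm : (2*i'+1).choose i' = (2*i'+1).choose (i'+1) := by
            have h := Nat.choose_symm (n := 2*i'+1) (k := i'+1) (by omega)
            rwa [show 2*i'+1-(i'+1) = i' from by omega] at h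
          have ha : f i' (i'+1) 0 = ((2*i'+1).choose (i'+1) : ℚ) := by
            rw [IH (2*(i'+(i'+1)) + (min i' (i'+1) - 0)) (by omega) i' (i'+1) 0 (le_refl _) (by omega),
              show max i' (i'+1) = i'+1 from by omega,
              show i'+(i'+1)-0 = 2*i'+1 from by omega]
          have hb : f (i'+1) i' 0 = ((2*i'+1).choose (i'+1) : ℚ) := by
            rw [IH (2*((i'+1)+i') + (min (i'+1) i' - 0)) (by omega) (i'+1) i' 0 (le_refl _) (by omega),
              show max (i'+1) i' = i'+1 from by omega,
              show (i'+1)+i'-0 = 2*i'+1 from by omega]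
          rw [f_rec1, pow_zero, _root_.coeff_one, if_neg (by omega), if_neg (by omega),
            if_neg (by omega), show i'+1-1 = i' from rfl, ha, hb,
            show max (i'+1) (i'+1) = i'+1 from by omega,
            show (i'+1)+(i'+1)-0 = (2*i'+1)+1 from by omega]
          conv_rhs => rw [Nat.choose_succ_succ]
          rw [hsymm]
          push_cast
          ring
        · obtain ⟨r', rfl⟩ : ∃ r', r = r' + 1 := ⟨r-1, by omega⟩
          rw [f_rec2, if_neg (by omega), show i'+1-1 = i' from rfl]
          have h1 : f i' i' r' = ((2*i'-r').choose i' : ℚ) := by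
            rw [IH (2*(i'+i') + (min i' i' - r')) (by omega) i' i' r' (le_refl _) (by omega),
              show max i' i' = i' from by omega, show i'+i'-r' = 2*i'-r' from by omega]
          have h2 : f (i'+1) (i'+1) (r'+2) = ((2*i'-r').choose (i'+1) : ℚ) := by
            by_cases h : r' + 2 ≤ i' + 1
            · rw [IH (2*((i'+1)+(i'+1)) + (min (i'+1) (i'+1) - (r'+2))) (by omega) (i'+1) (i'+1) (r'+2)
                (le_refl _) (by omega),
                show max (i'+1) (i'+1) = i'+1 from by omega,
                show (i'+1)+(i'+1)-(r'+2) = 2*i'-r' from by omega]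
            · rw [f_zero (by omega), Nat.choose_eq_zero_of_lt (by omega)]
              norm_num
          rw [h1, h2, show max (i'+1) (i'+1) = i'+1 from by omega,
            show (i'+1)+(i'+1)-(r'+1) = (2*i'-r')+1 from by omega]
          rw [Nat.choose_succ_succ]
          push_cast
          ring
    · -- i > j
      obtain ⟨i', rfl⟩ : ∃ i', i = i' + 1 := ⟨i-1, by omega⟩
      have h1 : (if i' + 1 = 0 then (0:ℚ) else f (i'+1-1) j r)
          = ((i'+j-r).choose i' : ℚ) := by
        rw [if_neg (by omega), show i'+1-1 = i' from rfl,
          IH (2*(i'+j) + (min i' j - r)) (by omega) i' j r (le_refl _) (by omega),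
          show max i' j = i' from by omega]
      have h2 : (if j = 0 then (0:ℚ) else f (i'+1) (j-1) r)
          = ((i'+j-r).choose (i'+1) : ℚ) := by
        by_cases h : j = 0
        · rw [if_pos h]
          have : r = 0 := by omega
          subst this; subst h
          rw [Nat.choose_eq_zero_of_lt (by omega)]
          norm_num
        · obtain ⟨j'', rfl⟩ : ∃ j'', j = j'' + 1 := ⟨j-1, by omega⟩
          rw [if_neg (by omega), show j''+1-1 = j'' from rfl]
          by_cases h' : r ≤ min (i'+1) j''
          · rw [IH (2*((i'+1)+j'') + (min (i'+1) j'' - r)) (by omega) (i'+1) j'' r (le_refl _) h',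
              show max (i'+1) j'' = i'+1 from by omega,
              show (i'+1)+j''-r = i'+(j''+1)-r from by omega]
          · rw [f_zero (by omega), Nat.choose_eq_zero_of_lt (by omega), Nat.cast_zero]
      rw [f_rec1, coeff_Ppow, if_neg (by omega), h1, h2, zero_add,
        show max (i'+1) j = i'+1 from by omega,
        show (i'+1)+j-r = (i'+j-r)+1 from by omega]
      rw [Nat.choose_succ_succ]
      push_cast
      ring

theorem stmt_7 (m1 m2 a b r : ℕ)
    (h1 : a ≤ b) (h2 : b ≤ b + r) (h3 : b + r ≤ m2) (h4 : m2 ≤ m1) :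
    MvPowerSeries.coeff (Finsupp.single 0 (m1 - a) + Finsupp.single 1 (m2 - b))
        (Pzy ^ r * invOneSubYZ)
      = Nat.choose (m1 + m2 - a - b - r) (m1 - a) := by
  have hr : r ≤ min (m1-a) (m2-b) := by omega
  have key := claimG (2*((m1-a)+(m2-b)) + (min (m1-a) (m2-b) - r)) (m1-a) (m2-b) r
    (le_refl _) hr
  rw [show (MvPowerSeries.coeff (Finsupp.single 0 (m1-a) + Finsupp.single 1 (m2-b))
      (Pzy ^ r * invOneSubYZ)) = f (m1-a) (m2-b) r from rfl, key,
    show max (m1-a) (m2-b) = m1-a from by omega,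
    show (m1-a)+(m2-b)-r = m1+m2-a-b-r from by omega]
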